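/- Let a, b, c be any real numbers and set (m_1,m_2,m_3) = (−c, a, b), (n_1,n_2,n_3) = (c, −a, b), (r_1,r_2,r_3) = (c, −1, ab). Then the determinant of the 3×3 matrix with rows (M_5, M_3, 1), (N_5, N_3, 1), (R_5, R_3, 1) equals −2(c−a)(a−1)(b+1)(c−1+a(b−1)). -/

import Mathlib

/-- For reals `a, b, c`, with the triples `m = (−c, a, b)`,
`n = (c, −a, b)`, `r = (c, −1, ab)` and, for a triple `s`,
`S₂ = −(s₁s₂ + s₁s₃ + s₂s₃)`, `S₃ = s₁ + s₂ + s₃`, `S₅ = S₃² + S₂`, the determinant of the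
3×3 matrix with rows `(M₅, M₃, 1)`, `(N₅, N₃, 1)`, `(R₅, R₃, 1)` equals
`−2(c−a)(a−1)(b+1)(c−1+a(b−1))`. -/
theorem stmt_6 (a b c : ℝ) :
    (!![((-c) + a + b) ^ 2 + -((-c) * a + (-c) * b + a * b), (-c) + a + b, 1;
        (c + (-a) + b) ^ 2 + -(c * (-a) + c * b + (-a) * b), c + (-a) + b, 1;
        (c + (-1) + a * b) ^ 2 + -(c * (-1) + c * (a * b) + (-1) * (a * b)),
          c + (-1) + a * b, 1] :
      Matrix (Fin 3) (Fin 3) ℝ).det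
      = -2 * (c - a) * (a - 1) * (b + 1) * (c - 1 + a * (b - 1)) := by
  rw [Matrix.det_fin_three]
  norm_num [Matrix.cons_val_zero, Matrix.cons_val_one, Matrix.cons_val_two, Matrix.head_cons, Matrix.head_fin_const, Matrix.vecHead, Matrix.vecTail]
  ring
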